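/- arXiv:0705.1485 — 2 statements merged into one kernel-verified Lean document; each statement's English description precedes it below -/
import Mathlib

section
/- In the dihedral Artin group A_k with dual generators, if y is a freely reduced word with P(y) = N(y) = 1 (no two consecutive letters multiply to δ or δ⁻¹), then as the letters of y are multiplied successively starting from the identity, at each step the quantity |r| + |r+s| increases by exactly 1, where δʳ w₁⋯wₛ is the left dual normal form of the current prefix; consequently d(e, y₁⋯yₙ) = n for every prefix. -/
set_option maxHeartbeats 1000000



/-- The relations `σᵢσᵢ₊₁ = σ₁σ₂` (indices mod `k`) of the dual presentation. -/
def DualRels (k : ℕ) [NeZero k] : Set (FreeGroup (Fin k)) :=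
  {x | ∃ i : Fin k, x = FreeGroup.of i * FreeGroup.of (i + 1) *
    (FreeGroup.of 0 * FreeGroup.of 1)⁻¹}

/-- The dihedral Artin group with its dual presentation
`⟨σ₁,…,σ_k ∣ σ₁σ₂ = σ₂σ₃ = ⋯ = σ_kσ₁⟩`. -/
abbrev DualArtin (k : ℕ) [NeZero k] : Type := PresentedGroup (DualRels k)

/-- The dual generator `σᵢ` (indexed by `Fin k`). -/
def sig {k : ℕ} [NeZero k] (i : Fin k) : DualArtin k := PresentedGroup.of i

/-- The dual Garside element `δ = σ₁σ₂`. -/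
def dualDelta (k : ℕ) [NeZero k] : DualArtin k := sig 0 * sig 1

/-- The dual generating set `{σ₁^{±1},…,σ_k^{±1}}`. -/
def dualGens (k : ℕ) [NeZero k] : Set (DualArtin k) :=
  {x | ∃ i : Fin k, x = sig i ∨ x = (sig i)⁻¹}

/-- Word length of `w` with respect to a generating set `S` (assumed symmetric). -/
noncomputable def wordLength {G : Type*} [Group G] (S : Set G) (w : G) : ℕ :=
  sInf {n | ∃ l : List G, l.length = n ∧ (∀ g ∈ l, g ∈ S) ∧ l.prod = w}

/-- A word in the dual generators: `(i, true)` stands for `σᵢ`, `(i, false)` for `σᵢ⁻¹`. -/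
def evalWord {k : ℕ} [NeZero k] (y : List (Fin k × Bool)) : DualArtin k :=
  (y.map fun p => if p.2 then sig p.1 else (sig p.1)⁻¹).prod

/-- A word is freely reduced if no letter is immediately followed by its inverse. -/
def FreelyReduced {k : ℕ} [NeZero k] (y : List (Fin k × Bool)) : Prop :=
  y.Chain' fun p q => ¬(q.1 = p.1 ∧ q.2 = !p.2)

/-- `dualPoss y`: the length of the longest element of `{σ₁,…,σ_k,δ}` (with the `σᵢ`
of length 1 and `δ` of length 2) obtainable as a product of consecutive letters of `y`. -/
noncomputable def dualPoss {k : ℕ} [NeZero k] (y : List (Fin k × Bool)) : ℕ :=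
  sSup ({0} ∪ {n | ∃ u : List (Fin k × Bool), u ≠ [] ∧ u.IsInfix y ∧
    ((n = 1 ∧ ∃ j : Fin k, evalWord u = sig j) ∨ (n = 2 ∧ evalWord u = dualDelta k))})

/-- `dualNegg y`: the analogue of `dualPoss` for `{σ₁⁻¹,…,σ_k⁻¹,δ⁻¹}`. -/
noncomputable def dualNegg {k : ℕ} [NeZero k] (y : List (Fin k × Bool)) : ℕ :=
  sSup ({0} ∪ {n | ∃ u : List (Fin k × Bool), u ≠ [] ∧ u.IsInfix y ∧
    ((n = 1 ∧ ∃ j : Fin k, evalWord u = (sig j)⁻¹) ∨ (n = 2 ∧ evalWord u = (dualDelta k)⁻¹))})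

/-- `y` is a geodesic word: its length equals the word length of the element it represents. -/
def IsGeodesicWord {k : ℕ} [NeZero k] (y : List (Fin k × Bool)) : Prop :=
  wordLength (dualGens k) (evalWord y) = y.length

/-- `w = δ^r w₁⋯wₛ` is a left dual normal form: the `wⱼ` are positive dual generators
and `s` is minimal among all such decompositions. -/
def IsDualLNF {k : ℕ} [NeZero k] (w : DualArtin k) (r : ℤ) (ws : List (DualArtin k)) : Prop :=
  (∀ x ∈ ws, ∃ i : Fin k, x = sig i) ∧ w = dualDelta k ^ r * ws.prod ∧
    ∀ (r' : ℤ) (ws' : List (DualArtin k)), (∀ x ∈ ws', ∃ i : Fin k, x = sig i) →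
      w = dualDelta k ^ r' * ws'.prod → ws.length ≤ ws'.length


section Dev
variable {k : ℕ} [NeZero k]

abbrev Red (l : List (Fin k)) : Prop := l.Chain' fun a b => a ≠ b + 1

lemma red_map_add {l : List (Fin k)} (d : Fin k) (h : Red l) : Red (l.map (· + d)) := by
  refine (List.isChain_map _).mpr (h.imp ?_)
  intro a b hab hh
  exact hab (by rwa [add_right_comm, add_left_inj] at hh)

lemma red_map_cancel (l : List (Fin k)) (d : Fin k) : (l.map (· + d)).map (· + (-d)) = l := by
  rw [List.map_map]
  simpa using List.map_id l

lemma red_map_cancel' (l : List (Fin k)) (d : Fin k) : (l.map (· + (-d))).map (· + d) = l := by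
  have := red_map_cancel l (-d)
  rwa [neg_neg] at this

lemma fin_two : (2 : Fin k) = 1 + 1 := by
  rw [Fin.ext_iff, Fin.val_add]; simp [Fin.val_ofNat, Fin.val_one', Nat.add_mod]
  rw [Nat.mod_mod, ← Nat.add_mod]

lemma feq1 (a j : Fin k) : a = j - 1 ↔ j = a + 1 := by
  rw [eq_sub_iff_add_eq, eq_comm]

lemma feq2 (a : Fin k) : a + 2 - 1 = a + 1 := by rw [fin_two]; abel

lemma feq4 (a : Fin k) : a + (-2) + 1 = a - 1 := by rw [fin_two]; abel

/-- plain right-multiplication by `σⱼ` on candidate normal forms. -/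
def posP (j : Fin k) : ℤ × List (Fin k) → ℤ × List (Fin k)
  | (r, []) => (r, [j])
  | (r, a :: t) => if a = j - 1 then (r + 1, t.map (· + 2)) else (r, j :: a :: t)

/-- plain right-multiplication by `σⱼ⁻¹` on candidate normal forms. -/
def negP (j : Fin k) : ℤ × List (Fin k) → ℤ × List (Fin k)
  | (r, []) => (r - 1, [j - 1])
  | (r, a :: t) => if a = j then (r, t) else (r - 1, (j - 1) :: (a :: t).map (· + (-2)))

lemma red_posP (j : Fin k) (p : ℤ × List (Fin k)) (h : Red p.2) : Red (posP j p).2 := by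
  obtain ⟨r, _ | ⟨a, t⟩⟩ := p
  · exact List.isChain_singleton j
  · simp only [posP]
    split_ifs with hc
    · exact red_map_add 2 ((List.isChain_cons.mp h).2)
    · refine List.isChain_cons_cons.mpr ⟨?_, h⟩
      intro hh
      exact hc ((feq1 a j).mpr hh)

lemma red_negP (j : Fin k) (p : ℤ × List (Fin k)) (h : Red p.2) : Red (negP j p).2 := by
  obtain ⟨r, _ | ⟨a, t⟩⟩ := p
  · exact List.isChain_singleton _
  · simp only [negP]
    split_ifs with hc
    · exact (List.isChain_cons.mp h).2
    · refine List.isChain_cons_cons.mpr ⟨?_, red_map_add _ h⟩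
      intro hh
      rw [feq4] at hh
      exact hc (sub_left_inj.mp hh).symm

lemma negP_posP (j : Fin k) (p : ℤ × List (Fin k)) (h : Red p.2) : negP j (posP j p) = p := by
  obtain ⟨r, _ | ⟨a, t⟩⟩ := p
  · simp [posP, negP]
  · simp only [posP]
    split_ifs with hc
    · rcases t with _ | ⟨b, t'⟩
      · simp only [List.map_nil, negP]
        rw [hc]
        simp
      · have hb : ¬ (b + 2 = j) := by
          intro hh
          have h1 : a ≠ b + 1 := (List.isChain_cons_cons.mp h).1
          apply h1
          rw [hc, ← hh, feq2]
        simp only [List.map_cons, negP, if_neg hb]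
        rw [← hc]
        simp [List.map_map, Function.comp]
    · simp [negP]

lemma posP_negP (j : Fin k) (p : ℤ × List (Fin k)) (h : Red p.2) : posP j (negP j p) = p := by
  obtain ⟨r, _ | ⟨a, t⟩⟩ := p
  · simp [negP, posP]
  · simp only [negP]
    split_ifs with hc
    · rcases t with _ | ⟨b, t'⟩
      · simp [posP, hc]
      · have hb : ¬ (b = j - 1) := by
          intro hh
          have h1 : a ≠ b + 1 := (List.isChain_cons_cons.mp h).1
          exact h1 (by rw [hh, hc, sub_add_cancel])
        simp [posP, if_neg hb, hc]
    · simp only [posP, if_pos rfl]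
      simp [List.map_map, Function.comp]

lemma fadd2 {a i : Fin k} (hc : a = i - 1) : a + 2 = i + 1 := by
  rw [hc, fin_two]; abel

lemma posP_posP (i : Fin k) (p : ℤ × List (Fin k)) (h : Red p.2) :
    posP (i + 1) (posP i p) = (p.1 + 1, p.2.map (· + 2)) := by
  obtain ⟨r, _ | ⟨a, t⟩⟩ := p
  · simp only [posP]
    rw [if_pos (add_sub_cancel_right i 1).symm]
  · simp only [posP]
    split_ifs with hc
    · rcases t with _ | ⟨b, t'⟩
      · simp only [List.map_nil, posP, List.map_cons]
        rw [fadd2 hc]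
      · have hb : ¬ (b + 2 = (i + 1) - 1) := by
          rw [add_sub_cancel_right]
          intro hh
          exact (List.isChain_cons_cons.mp h).1 (by rw [hc, ← hh, feq2])
        simp only [List.map_cons, posP, if_neg hb]
        rw [fadd2 hc]
    · simp only [posP]
      rw [if_pos (add_sub_cancel_right i 1).symm]

def NF (k : ℕ) [NeZero k] : Type := ℤ × {l : List (Fin k) // Red l}

def toPlain (p : NF k) : ℤ × List (Fin k) := (p.1, p.2.val)

lemma toPlain_inj : Function.Injective (toPlain (k := k)) := by
  rintro ⟨r, ⟨l, hl⟩⟩ ⟨r', ⟨l', hl'⟩⟩ h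
  simp only [toPlain, Prod.mk.injEq] at h
  obtain ⟨rfl, rfl⟩ := h
  rfl

def posFun (j : Fin k) (p : NF k) : NF k :=
  ((posP j (toPlain p)).1, ⟨(posP j (toPlain p)).2, red_posP j (toPlain p) p.2.2⟩)

def negFun (j : Fin k) (p : NF k) : NF k :=
  ((negP j (toPlain p)).1, ⟨(negP j (toPlain p)).2, red_negP j (toPlain p) p.2.2⟩)

@[simp] lemma toPlain_posFun (j : Fin k) (p : NF k) :
    toPlain (posFun j p) = posP j (toPlain p) := rfl

@[simp] lemma toPlain_negFun (j : Fin k) (p : NF k) :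
    toPlain (negFun j p) = negP j (toPlain p) := rfl

def genE (j : Fin k) : Equiv.Perm (NF k) where
  toFun := posFun j
  invFun := negFun j
  left_inv := fun p => toPlain_inj (by
    rw [toPlain_negFun, toPlain_posFun, negP_posP j (toPlain p) p.2.2])
  right_inv := fun p => toPlain_inj (by
    rw [toPlain_posFun, toPlain_negFun, posP_negP j (toPlain p) p.2.2])

lemma genE_genE (i : Fin k) (p : NF k) :
    toPlain (genE (i + 1) (genE i p)) = ((toPlain p).1 + 1, (toPlain p).2.map (· + 2)) := by
  show toPlain (posFun (i+1) (posFun i p)) = _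
  rw [toPlain_posFun, toPlain_posFun, posP_posP i (toPlain p) p.2.2]

/-! ### The group relations -/

lemma sig_mul_sig (i : Fin k) : sig i * sig (i + 1) = dualDelta k := by
  have hmem : (FreeGroup.of i * FreeGroup.of (i + 1) * (FreeGroup.of 0 * FreeGroup.of 1)⁻¹ :
      FreeGroup (Fin k)) ∈ Subgroup.normalClosure (DualRels k) :=
    Subgroup.subset_normalClosure ⟨i, rfl⟩
  have h1 : ((QuotientGroup.mk (FreeGroup.of i * FreeGroup.of (i + 1) *
      (FreeGroup.of 0 * FreeGroup.of 1)⁻¹) : PresentedGroup (DualRels k))) = 1 :=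
    (QuotientGroup.eq_one_iff _).mpr hmem
  have h2 : (QuotientGroup.mk (FreeGroup.of i * FreeGroup.of (i + 1) *
      (FreeGroup.of 0 * FreeGroup.of 1)⁻¹) : PresentedGroup (DualRels k))
      = sig i * sig (i + 1) * (sig 0 * sig 1)⁻¹ := rfl
  rw [h2] at h1
  rw [dualDelta]
  exact mul_inv_eq_one.mp h1

lemma sig_rel' (j : Fin k) : sig (j - 1) * sig j = dualDelta k := by
  have := sig_mul_sig (j - 1)
  rwa [sub_add_cancel] at this

lemma sig_inv_eq (j : Fin k) : (sig j)⁻¹ = (dualDelta k)⁻¹ * sig (j - 1) := by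
  rw [← sig_rel' j]
  group

lemma delta_sig_comm (i : Fin k) : dualDelta k * sig (i + 2) = sig i * dualDelta k := by
  have h1 : sig i * sig (i + 1) = dualDelta k := sig_mul_sig i
  have h2 : sig (i + 1) * sig (i + 1 + 1) = dualDelta k := sig_mul_sig (i + 1)
  have h3 : (i + 1 + 1 : Fin k) = i + 2 := by rw [fin_two]; abel
  rw [h3] at h2
  calc dualDelta k * sig (i + 2) = sig i * (sig (i+1) * sig (i + 2)) := by rw [← h1]; group
  _ = sig i * dualDelta k := by rw [h2]

/-! ### evaluation of normal forms -/

def evR (l : List (Fin k)) : DualArtin k := (l.reverse.map sig).prod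

@[simp] lemma evR_nil : evR ([] : List (Fin k)) = 1 := rfl

lemma evR_cons (j : Fin k) (l : List (Fin k)) : evR (j :: l) = evR l * sig j := by
  simp [evR]

lemma delta_evR_shift (l : List (Fin k)) :
    dualDelta k * evR (l.map (· + 2)) = evR l * dualDelta k := by
  induction l with
  | nil => simp
  | cons j l ih =>
      rw [List.map_cons, evR_cons, evR_cons, ← mul_assoc, ih, mul_assoc,
        delta_sig_comm j, ← mul_assoc]

def PsiP (q : ℤ × List (Fin k)) : DualArtin k := dualDelta k ^ q.1 * evR q.2

lemma evR_shift_eq (l : List (Fin k)) :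
    evR (l.map (· + (-2))) = dualDelta k * evR l * (dualDelta k)⁻¹ := by
  have h := delta_evR_shift (l.map (· + (-2)))
  rw [red_map_cancel'] at h
  exact ((mul_inv_eq_iff_eq_mul).mpr h).symm

lemma PsiP_posP (j : Fin k) (q : ℤ × List (Fin k)) : PsiP (posP j q) = PsiP q * sig j := by
  obtain ⟨r, _ | ⟨a, t⟩⟩ := q
  · simp [PsiP, posP, evR_cons, mul_assoc]
  · simp only [posP]
    split_ifs with hc
    · simp only [PsiP, evR_cons]
      rw [zpow_add_one, mul_assoc, delta_evR_shift, hc, mul_assoc, mul_assoc, sig_rel' j]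
    · simp [PsiP, evR_cons, mul_assoc]

lemma PsiP_negP (j : Fin k) (q : ℤ × List (Fin k)) : PsiP (negP j q) = PsiP q * (sig j)⁻¹ := by
  obtain ⟨r, _ | ⟨a, t⟩⟩ := q
  · simp only [PsiP, negP, evR_cons, evR_nil]
    rw [zpow_sub_one, sig_inv_eq j]
    group
  · simp only [negP]
    split_ifs with hc
    · subst hc
      simp [PsiP, evR_cons, mul_assoc]
    · simp only [PsiP, evR_cons]
      rw [evR_shift_eq, zpow_sub_one, sig_inv_eq j, evR_cons]
      group

def PsiNF (p : NF k) : DualArtin k := PsiP (toPlain p)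

lemma PsiNF_posFun (j : Fin k) (p : NF k) : PsiNF (posFun j p) = PsiNF p * sig j :=
  PsiP_posP j (toPlain p)

lemma PsiNF_negFun (j : Fin k) (p : NF k) : PsiNF (negFun j p) = PsiNF p * (sig j)⁻¹ :=
  PsiP_negP j (toPlain p)

/-! ### the permutation representation -/

def fgen (j : Fin k) : (Equiv.Perm (NF k))ᵐᵒᵖ := MulOpposite.op (genE j)

lemma relcheck : ∀ r ∈ DualRels k, (FreeGroup.lift (fgen (k := k))) r = 1 := by
  rintro _ ⟨i, rfl⟩
  rw [map_mul, map_mul, map_inv, map_mul]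
  simp only [FreeGroup.lift_apply_of]
  apply MulOpposite.unop_injective
  simp only [MulOpposite.unop_mul, MulOpposite.unop_inv, MulOpposite.unop_op,
    MulOpposite.unop_one, fgen]
  rw [inv_mul_eq_one]
  apply Equiv.ext
  intro p
  rw [Equiv.Perm.mul_apply, Equiv.Perm.mul_apply]
  apply toPlain_inj
  have h1 := genE_genE i p
  have h2 := genE_genE 0 p
  rw [zero_add] at h2
  rw [h1, h2]

def Phi : DualArtin k →* (Equiv.Perm (NF k))ᵐᵒᵖ := PresentedGroup.toGroup relcheck

def basept : NF k := (0, ⟨[], List.isChain_nil⟩)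

def nf (w : DualArtin k) : NF k := (Phi w).unop basept

@[simp] lemma nf_one : nf (1 : DualArtin k) = basept := by
  simp [nf]

lemma Phi_sig (j : Fin k) : Phi (sig j) = fgen j := PresentedGroup.toGroup.of relcheck

lemma nf_mul (w v : DualArtin k) : nf (w * v) = (Phi v).unop (nf w) := by
  rw [nf, map_mul, MulOpposite.unop_mul, Equiv.Perm.mul_apply, nf]

lemma nf_mul_sig (w : DualArtin k) (j : Fin k) : nf (w * sig j) = posFun j (nf w) := by
  rw [nf_mul, Phi_sig]
  rfl

lemma nf_mul_sig_inv (w : DualArtin k) (j : Fin k) :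
    nf (w * (sig j)⁻¹) = negFun j (nf w) := by
  rw [nf_mul, map_inv, Phi_sig, MulOpposite.unop_inv]
  rfl

/-! ### reconstruction: every element is the evaluation of its normal form -/

def goodSub : Subgroup (DualArtin k) where
  carrier := {w | ∀ p : NF k, PsiNF ((Phi w).unop p) = PsiNF p * w}
  one_mem' := by
    intro p
    rw [map_one]
    simp
  mul_mem' := by
    intro a b ha hb p
    rw [map_mul, MulOpposite.unop_mul, Equiv.Perm.mul_apply, hb, ha, mul_assoc]
  inv_mem' := by
    intro w hw p
    have hcomp : (Phi w).unop ((Phi w⁻¹).unop p) = p := by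
      rw [← Equiv.Perm.mul_apply, ← MulOpposite.unop_mul, ← map_mul, inv_mul_cancel, map_one]
      simp
    have := hw ((Phi w⁻¹).unop p)
    rw [hcomp] at this
    rw [eq_mul_inv_iff_mul_eq, this]

lemma recon_aux (w : DualArtin k) : ∀ p : NF k, PsiNF ((Phi w).unop p) = PsiNF p * w := by
  have htop : w ∈ goodSub (k := k) := by
    have h1 : Subgroup.closure (Set.range (PresentedGroup.of (rels := DualRels k))) ≤
        goodSub (k := k) := by
      rw [Subgroup.closure_le]
      rintro _ ⟨x, rfl⟩
      intro p
      have : (PresentedGroup.of (rels := DualRels k) x) = sig x := rfl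
      rw [this, Phi_sig]
      exact PsiNF_posFun x p
    rw [PresentedGroup.closure_range_of] at h1
    exact h1 (Subgroup.mem_top w)
  exact htop

lemma recon (w : DualArtin k) : dualDelta k ^ (nf w).1 * evR (nf w).2.val = w := by
  have h := recon_aux w basept
  rw [nf]
  have hb : PsiNF (basept (k := k)) = 1 := by
    simp [PsiNF, PsiP, basept, toPlain]
  rw [hb, one_mul] at h
  exact h

/-! ### normal form of delta powers -/

lemma nf_mul_delta (w : DualArtin k) :
    toPlain (nf (w * dualDelta k)) = ((nf w).1 + 1, (nf w).2.val.map (· + 2)) := by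
  have : w * dualDelta k = w * sig 0 * sig 1 := by rw [dualDelta, mul_assoc]
  rw [this, nf_mul_sig, nf_mul_sig]
  have h := genE_genE 0 (nf w)
  rw [zero_add] at h
  exact h

lemma nf_mul_delta_inv (w : DualArtin k) :
    toPlain (nf (w * (dualDelta k)⁻¹)) = ((nf w).1 - 1, (nf w).2.val.map (· + (-2))) := by
  have h := nf_mul_delta (w * (dualDelta k)⁻¹)
  rw [inv_mul_cancel_right] at h
  have h1 : (nf (w * (dualDelta k)⁻¹)).1 = (nf w).1 - 1 := by
    have := congrArg Prod.fst h
    simp only [toPlain] at this ⊢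
    omega
  have h2 : (nf (w * (dualDelta k)⁻¹)).2.val = (nf w).2.val.map (· + (-2)) := by
    have := congrArg Prod.snd h
    simp only [toPlain] at this
    rw [this, red_map_cancel]
  rw [toPlain, h1, h2]

lemma nf_delta_zpow (r : ℤ) : toPlain (nf (dualDelta k ^ r)) = (r, []) := by
  induction r using Int.induction_on with
  | zero => simp [toPlain, basept]
  | succ n ih =>
      have : dualDelta k ^ ((n : ℤ) + 1) = dualDelta k ^ (n : ℤ) * dualDelta k := zpow_add_one _ _
      rw [this, nf_mul_delta]
      have h1 := congrArg Prod.fst ih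
      have h2 := congrArg Prod.snd ih
      simp only [toPlain] at h1 h2
      rw [h1, h2]
      simp
  | pred n ih =>
      have : dualDelta k ^ (-(n : ℤ) - 1) = dualDelta k ^ (-(n : ℤ)) * (dualDelta k)⁻¹ :=
        zpow_sub_one _ _
      rw [this, nf_mul_delta_inv]
      have h1 := congrArg Prod.fst ih
      have h2 := congrArg Prod.snd ih
      simp only [toPlain] at h1 h2
      rw [h1, h2]
      simp

/-! ### runs of positive letters -/

lemma nf_mul_prod_sig (w : DualArtin k) (u : List (Fin k)) :
    nf (w * (u.map sig).prod) = u.foldl (fun q j => posFun j q) (nf w) := by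
  induction u generalizing w with
  | nil => simp
  | cons j v ih =>
      rw [List.map_cons, List.prod_cons, ← mul_assoc, List.foldl_cons, ← nf_mul_sig]
      exact ih (w * sig j)

lemma posFun_stats (j : Fin k) (p : NF k) :
    2 * (posFun j p).1 + ((posFun j p).2.val.length : ℤ) = 2 * p.1 + p.2.val.length + 1 ∧
    ((posFun j p).1 = p.1 ∨ (posFun j p).1 = p.1 + 1) := by
  obtain ⟨r, ⟨_ | ⟨a, t⟩, h⟩⟩ := p
  · have : toPlain (posFun j (r, ⟨[], h⟩)) = (r, [j]) := rfl
    have h1 := congrArg Prod.fst this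
    have h2 := congrArg (fun q => q.2.length) this
    simp only [toPlain] at h1 h2
    rw [h1, h2]
    simp
  · by_cases hc : a = j - 1
    · have : toPlain (posFun j (r, ⟨a :: t, h⟩)) = (r + 1, t.map (· + 2)) := by
        have e0 : toPlain (posFun j (r, ⟨a :: t, h⟩)) = posP j (r, a :: t) := rfl
        rw [e0]
        simp [posP, hc]
      have h1 := congrArg Prod.fst this
      have h2 := congrArg (fun q => q.2.length) this
      simp only [toPlain] at h1 h2
      rw [h1, h2]
      simp only [List.length_map, List.length_cons]
      constructor
      · push_cast; ring
      · right; trivial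
    · have : toPlain (posFun j (r, ⟨a :: t, h⟩)) = (r, j :: a :: t) := by
        have e0 : toPlain (posFun j (r, ⟨a :: t, h⟩)) = posP j (r, a :: t) := rfl
        rw [e0]
        simp [posP, hc]
      have h1 := congrArg Prod.fst this
      have h2 := congrArg (fun q => q.2.length) this
      simp only [toPlain] at h1 h2
      rw [h1, h2]
      simp only [List.length_cons]
      constructor
      · push_cast; ring
      · left; trivial

lemma run_stats (u : List (Fin k)) (p : NF k) :
    2 * (u.foldl (fun q j => posFun j q) p).1 + ((u.foldl (fun q j => posFun j q) p).2.val.length : ℤ)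
      = 2 * p.1 + p.2.val.length + u.length ∧
    (u.foldl (fun q j => posFun j q) p).2.val.length ≤ p.2.val.length + u.length := by
  induction u generalizing p with
  | nil => simp
  | cons j v ih =>
      rw [List.foldl_cons]
      obtain ⟨k1, k2⟩ := posFun_stats j p
      obtain ⟨i1, i2⟩ := ih (posFun j p)
      constructor
      · rw [i1]
        push_cast
        push_cast at k1
        simp only [List.length_cons]
        push_cast
        omega
      · have hlen : (posFun j p).2.val.length ≤ p.2.val.length + 1 := by omega
        calc _ ≤ (posFun j p).2.val.length + v.length := i2
          _ ≤ p.2.val.length + 1 + v.length := by omega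
          _ = p.2.val.length + (j :: v).length := by simp; omega

/-! ### pinning down left normal forms -/

lemma exists_map_sig {ws : List (DualArtin k)} (h : ∀ x ∈ ws, ∃ i : Fin k, x = sig i) :
    ∃ u : List (Fin k), ws = u.map sig := by
  induction ws with
  | nil => exact ⟨[], rfl⟩
  | cons a t ih =>
      obtain ⟨i, hi⟩ := h a (List.mem_cons_self)
      obtain ⟨u, hu⟩ := ih fun x hx => h x (List.mem_cons_of_mem a hx)
      exact ⟨i :: u, by rw [List.map_cons, ← hi, ← hu]⟩

lemma lnf_pin {w : DualArtin k} {r : ℤ} {ws : List (DualArtin k)} (h : IsDualLNF w r ws) :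
    (nf w).1 = r ∧ (nf w).2.val.length = ws.length := by
  obtain ⟨hpos, hdecomp, hmin⟩ := h
  obtain ⟨u, rfl⟩ := exists_map_sig hpos
  have hrun : nf w = u.foldl (fun q j => posFun j q) (nf (dualDelta k ^ r)) := by
    rw [hdecomp, nf_mul_prod_sig]
  have hd1 : (nf (dualDelta k ^ r)).1 = r := congrArg Prod.fst (nf_delta_zpow r)
  have hd2 : (nf (dualDelta k ^ r)).2.val = [] := congrArg Prod.snd (nf_delta_zpow r)
  obtain ⟨s1, s2⟩ := run_stats u (nf (dualDelta k ^ r))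
  rw [← hrun] at s1 s2
  rw [hd1] at s1
  rw [hd2] at s1
  rw [hd2] at s2
  simp only [List.length_nil, List.length_map] at s1 s2 ⊢
  -- the normal form itself gives a valid decomposition
  have hvalid : w = dualDelta k ^ (nf w).1 * (((nf w).2.val.reverse.map sig)).prod := by
    conv_lhs => rw [← recon w]
    rw [evR]
  have hmin2 := hmin (nf w).1 ((nf w).2.val.reverse.map sig)
    (by rintro x hx
        rw [List.mem_map] at hx
        obtain ⟨i, _, rfl⟩ := hx
        exact ⟨i, rfl⟩) hvalid
  simp only [List.length_map, List.length_reverse] at hmin2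
  omega

/-! ### the length function -/

def lenNF (p : NF k) : ℕ := p.1.natAbs + (p.1 + p.2.val.length).natAbs

lemma lenNF_posFun (j : Fin k) (p : NF k) : lenNF (posFun j p) ≤ lenNF p + 1 := by
  obtain ⟨k1, k2⟩ := posFun_stats j p
  unfold lenNF
  omega

lemma negFun_stats (j : Fin k) (p : NF k) :
    2 * (negFun j p).1 + ((negFun j p).2.val.length : ℤ) = 2 * p.1 + p.2.val.length - 1 ∧
    ((negFun j p).1 = p.1 ∨ (negFun j p).1 = p.1 - 1) := by
  have h := posFun_stats j (negFun j p)
  have heq : posFun j (negFun j p) = p := (genE j).right_inv p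
  rw [heq] at h
  omega

lemma lenNF_negFun (j : Fin k) (p : NF k) : lenNF (negFun j p) ≤ lenNF p + 1 := by
  obtain ⟨k1, k2⟩ := negFun_stats j p
  unfold lenNF
  omega

lemma lenNF_prod_le (l : List (DualArtin k)) (h : ∀ g ∈ l, g ∈ dualGens k) :
    lenNF (nf l.prod) ≤ l.length := by
  induction l using List.reverseRecOn with
  | nil => simp [lenNF, basept, toPlain]
  | append_singleton l x ih =>
      have hx := h x (by simp)
      have hl : ∀ g ∈ l, g ∈ dualGens k := fun g hg => h g (by simp [hg])
      rw [List.prod_append, List.prod_singleton]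
      obtain ⟨i, hi | hi⟩ := hx
      · rw [hi, nf_mul_sig]
        calc lenNF (posFun i (nf l.prod)) ≤ lenNF (nf l.prod) + 1 := lenNF_posFun _ _
          _ ≤ l.length + 1 := by have := ih hl; omega
          _ = (l ++ [sig i]).length := by simp
      · rw [hi, nf_mul_sig_inv]
        calc lenNF (negFun i (nf l.prod)) ≤ lenNF (nf l.prod) + 1 := lenNF_negFun _ _
          _ ≤ l.length + 1 := by have := ih hl; omega
          _ = (l ++ [(sig i)⁻¹]).length := by simp

lemma wordLength_eq {w : DualArtin k} {n : ℕ}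
    (hub : ∃ l : List (DualArtin k), l.length = n ∧ (∀ g ∈ l, g ∈ dualGens k) ∧ l.prod = w)
    (hlen : lenNF (nf w) = n) : wordLength (dualGens k) w = n := by
  apply le_antisymm
  · exact Nat.sInf_le hub
  · apply le_csInf ⟨n, hub⟩
    rintro m ⟨l, hl, hg, hp⟩
    calc n = lenNF (nf w) := hlen.symm
      _ = lenNF (nf l.prod) := by rw [hp]
      _ ≤ l.length := lenNF_prod_le l hg
      _ = m := hl

/-! ### infix extraction -/

def genOf (p : Fin k × Bool) : DualArtin k := if p.2 then sig p.1 else (sig p.1)⁻¹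

lemma evalWord_append (a b : List (Fin k × Bool)) :
    evalWord (a ++ b) = evalWord a * evalWord b := by
  simp [evalWord]

lemma evalWord_pair (p q : Fin k × Bool) : evalWord [p, q] = genOf p * genOf q := by
  simp [evalWord, genOf]

lemma evalWord_take_succ {y : List (Fin k × Bool)} {n : ℕ} (h : n < y.length) :
    evalWord (y.take (n + 1)) = evalWord (y.take n) * genOf (y.getD n ((0 : Fin k), true)) := by
  rw [List.take_succ, List.getElem?_eq_getElem h, evalWord_append,
    List.getD_eq_getElem y _ h]
  simp [evalWord, genOf]

lemma take_eq_pair {y : List (Fin k × Bool)} {n : ℕ} (h1 : 1 ≤ n) (h2 : n < y.length) :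
    y.take (n + 1) = y.take (n - 1) ++
      [y.getD (n - 1) ((0 : Fin k), true), y.getD n ((0 : Fin k), true)] := by
  have e1 : y.take n = y.take (n - 1) ++ [y.getD (n - 1) ((0 : Fin k), true)] := by
    have h3 : n - 1 < y.length := by omega
    have := List.take_succ (l := y) (i := n - 1)
    rw [List.getElem?_eq_getElem h3, show n - 1 + 1 = n by omega] at this
    rw [this, List.getD_eq_getElem y _ h3]
    rfl
  rw [List.take_succ, List.getElem?_eq_getElem h2, e1, List.getD_eq_getElem y _ h2]
  simp

lemma pair_infix {y : List (Fin k × Bool)} {n : ℕ} (h1 : 1 ≤ n) (h2 : n < y.length) :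
    List.IsInfix [y.getD (n - 1) ((0 : Fin k), true), y.getD n ((0 : Fin k), true)] y := by
  refine ⟨y.take (n - 1), y.drop (n + 1), ?_⟩
  rw [← take_eq_pair h1 h2, List.take_append_drop]

lemma hy_consec {y : List (Fin k × Bool)} (hy : FreelyReduced y) {m : ℕ}
    (h2 : m + 1 < y.length) :
    ¬((y.getD (m + 1) ((0 : Fin k), true)).1 = (y.getD m ((0 : Fin k), true)).1 ∧
      (y.getD (m + 1) ((0 : Fin k), true)).2 = !(y.getD m ((0 : Fin k), true)).2) := by
  have h3 : m < y.length - 1 := by omega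
  have hthis := (List.isChain_iff_getElem.mp hy) m h2
  rw [List.getD_eq_getElem y _ h2, List.getD_eq_getElem y _ (by omega : m < y.length)]
  exact hthis

lemma poss_bdd (y : List (Fin k × Bool)) :
    BddAbove ({0} ∪ {n | ∃ u : List (Fin k × Bool), u ≠ [] ∧ u.IsInfix y ∧
      ((n = 1 ∧ ∃ j : Fin k, evalWord u = sig j) ∨ (n = 2 ∧ evalWord u = dualDelta k))}) := by
  refine ⟨2, ?_⟩
  rintro x (hx | ⟨u, _, _, (⟨rfl, _⟩ | ⟨rfl, _⟩)⟩)
  · simp at hx; omega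
  · omega
  · omega

lemma negg_bdd (y : List (Fin k × Bool)) :
    BddAbove ({0} ∪ {n | ∃ u : List (Fin k × Bool), u ≠ [] ∧ u.IsInfix y ∧
      ((n = 1 ∧ ∃ j : Fin k, evalWord u = (sig j)⁻¹) ∨ (n = 2 ∧ evalWord u = (dualDelta k)⁻¹))}) := by
  refine ⟨2, ?_⟩
  rintro x (hx | ⟨u, _, _, (⟨rfl, _⟩ | ⟨rfl, _⟩)⟩)
  · simp at hx; omega
  · omega
  · omega

lemma no_delta {y : List (Fin k × Bool)} (hP : dualPoss y = 1) {u : List (Fin k × Bool)}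
    (hu : u ≠ []) (hi : u.IsInfix y) : evalWord u ≠ dualDelta k := by
  intro he
  have h2 : (2 : ℕ) ∈ ({0} ∪ {n | ∃ u : List (Fin k × Bool), u ≠ [] ∧ u.IsInfix y ∧
      ((n = 1 ∧ ∃ j : Fin k, evalWord u = sig j) ∨ (n = 2 ∧ evalWord u = dualDelta k))}) :=
    Or.inr ⟨u, hu, hi, Or.inr ⟨rfl, he⟩⟩
  have hle := le_csSup (poss_bdd y) h2
  rw [← dualPoss, hP] at hle
  omega

lemma no_delta_inv {y : List (Fin k × Bool)} (hN : dualNegg y = 1) {u : List (Fin k × Bool)}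
    (hu : u ≠ []) (hi : u.IsInfix y) : evalWord u ≠ (dualDelta k)⁻¹ := by
  intro he
  have h2 : (2 : ℕ) ∈ ({0} ∪ {n | ∃ u : List (Fin k × Bool), u ≠ [] ∧ u.IsInfix y ∧
      ((n = 1 ∧ ∃ j : Fin k, evalWord u = (sig j)⁻¹) ∨ (n = 2 ∧ evalWord u = (dualDelta k)⁻¹))}) :=
    Or.inr ⟨u, hu, hi, Or.inr ⟨rfl, he⟩⟩
  have hle := le_csSup (negg_bdd y) h2
  rw [← dualNegg, hN] at hle
  omega

/-- value recorded on top of the stack by the letter `p`. -/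
def hV (p : Fin k × Bool) : Fin k := if p.2 then p.1 else p.1 - 1

lemma master {y : List (Fin k × Bool)} (hy : FreelyReduced y)
    (hP : dualPoss y = 1) (hN : dualNegg y = 1) :
    ∀ n, n ≤ y.length →
      (nf (evalWord (y.take n))).1 ≤ 0 ∧
      (nf (evalWord (y.take n))).2.val.length = n ∧
      0 ≤ (nf (evalWord (y.take n))).1 + n ∧
      (∀ m, n = m + 1 → (nf (evalWord (y.take n))).2.val.head? =
        some (hV (y.getD m ((0 : Fin k), true)))) := by
  intro n
  induction n with
  | zero =>
      intro _
      have h0 : evalWord (y.take 0) = 1 := rfl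
      rw [h0, nf_one]
      refine ⟨le_refl 0, rfl, by simp [basept], by intro m hm; omega⟩
  | succ n ih =>
      intro hn1
      have hn : n < y.length := by omega
      obtain ⟨ha1, ha2, ha3, ha4⟩ := ih (by omega)
      set L := y.getD n ((0 : Fin k), true) with hL
      set q := nf (evalWord (y.take n)) with hq
      rw [evalWord_take_succ hn, ← hL]
      rcases hb : L.2 with _ | _
      -- negative letter
      · have hg : genOf L = (sig L.1)⁻¹ := by simp [genOf, hb]
        rw [hg, nf_mul_sig_inv, ← hq]
        rcases Nat.eq_zero_or_pos n with hn0 | hn0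
        · subst hn0
          have hq0 : toPlain q = (0, []) := by
            rw [hq]
            have h0 : evalWord (y.take 0) = 1 := rfl
            rw [h0, nf_one]
            rfl
          have ht : toPlain (negFun L.1 q) = (-1, [L.1 - 1]) := by
            rw [toPlain_negFun, hq0]
            simp [negP]
          have h1 := congrArg Prod.fst ht
          have h2 := congrArg Prod.snd ht
          simp only [toPlain] at h1 h2
          refine ⟨by omega, by rw [h2]; rfl, by rw [h1]; simp, fun m hm => ?_⟩
          have hm0 : m = 0 := by omega
          subst hm0
          rw [h2, ← hL]
          simp [hV, hb]
        · -- n ≥ 1 : expose the stack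
          obtain ⟨a, t, hat⟩ := List.exists_cons_of_ne_nil
            (show q.2.val ≠ [] by intro hh; rw [hh] at ha2; simp at ha2; omega)
          have hhead := ha4 (n - 1) (by omega)
          rw [hat] at hhead
          simp only [List.head?] at hhead
          have ha : a = hV (y.getD (n - 1) ((0 : Fin k), true)) := by
            injection hhead
          set prev := y.getD (n - 1) ((0 : Fin k), true) with hprev
          have hcancel : ¬ (a = L.1) := by
            intro hc
            rcases hp : prev.2 with _ | _
            · -- previous letter negative: infix evaluating to δ⁻¹
              have hvv : a = prev.1 - 1 := by rw [ha, hV, hp]; simp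
              have hL1 : L.1 = prev.1 - 1 := by rw [← hc, hvv]
              have hinf := pair_infix (y := y) hn0 hn
              apply no_delta_inv hN (by simp) hinf
              rw [evalWord_pair, ← hprev, ← hL]
              have e1 : genOf prev = (sig prev.1)⁻¹ := by simp [genOf, hp]
              have e2 : genOf L = (sig L.1)⁻¹ := by simp [genOf, hb]
              rw [e1, e2, hL1]
              rw [show ((sig prev.1)⁻¹ * (sig (prev.1 - 1))⁻¹ : DualArtin k)
                  = (sig (prev.1 - 1) * sig prev.1)⁻¹ by group, sig_rel' prev.1]
            · -- previous letter positive with same index: free reduction violated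
              have hvv : a = prev.1 := by rw [ha, hV, hp]; simp
              have hcons := hy_consec hy (m := n - 1) (by omega)
              rw [show n - 1 + 1 = n by omega] at hcons
              exact hcons ⟨by rw [← hL, ← hprev, ← hvv, hc], by
                rw [← hL, ← hprev, hb, hp]; rfl⟩
          have ht : toPlain (negFun L.1 q) =
              (q.1 - 1, (L.1 - 1) :: (a :: t).map (· + (-2))) := by
            rw [toPlain_negFun]
            have : toPlain q = (q.1, a :: t) := by rw [toPlain, hat]
            rw [this]
            simp [negP, hcancel]
          have h1 := congrArg Prod.fst ht
          have h2 := congrArg Prod.snd ht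
          simp only [toPlain] at h1 h2
          have hlen : (negFun L.1 q).2.val.length = n + 1 := by
            rw [h2]
            simp only [List.length_cons, List.length_map]
            rw [← List.length_cons (a := a) (as := t), ← hat, ha2]
          refine ⟨by omega, hlen, by omega, fun m hm => ?_⟩
          have hm0 : m = n := by omega
          subst hm0
          rw [h2, ← hL]
          simp [hV, hb]
      -- positive letter
      · have hg : genOf L = sig L.1 := by simp [genOf, hb]
        rw [hg, nf_mul_sig, ← hq]
        rcases Nat.eq_zero_or_pos n with hn0 | hn0
        · subst hn0
          have hq0 : toPlain q = (0, []) := by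
            rw [hq]
            have h0 : evalWord (y.take 0) = 1 := rfl
            rw [h0, nf_one]
            rfl
          have ht : toPlain (posFun L.1 q) = (0, [L.1]) := by
            rw [toPlain_posFun, hq0]
            rfl
          have h1 := congrArg Prod.fst ht
          have h2 := congrArg Prod.snd ht
          simp only [toPlain] at h1 h2
          refine ⟨by omega, by rw [h2]; rfl, by rw [h1]; simp, fun m hm => ?_⟩
          have hm0 : m = 0 := by omega
          subst hm0
          rw [h2, ← hL]
          simp [hV, hb]
        · obtain ⟨a, t, hat⟩ := List.exists_cons_of_ne_nil
            (show q.2.val ≠ [] by intro hh; rw [hh] at ha2; simp at ha2; omega)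
          have hhead := ha4 (n - 1) (by omega)
          rw [hat] at hhead
          simp only [List.head?] at hhead
          have ha : a = hV (y.getD (n - 1) ((0 : Fin k), true)) := by
            injection hhead
          set prev := y.getD (n - 1) ((0 : Fin k), true) with hprev
          have hcombine : ¬ (a = L.1 - 1) := by
            intro hc
            rcases hp : prev.2 with _ | _
            · -- previous letter negative with cancelling index: free reduction violated
              have hvv : a = prev.1 - 1 := by rw [ha, hV, hp]; simp
              have : prev.1 = L.1 := by
                have := hvv.symm.trans hc
                exact sub_left_inj.mp this
              have hcons := hy_consec hy (m := n - 1) (by omega)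
              rw [show n - 1 + 1 = n by omega] at hcons
              exact hcons ⟨by rw [← hL, ← hprev, this], by
                rw [← hL, ← hprev, hb, hp]; rfl⟩
            · -- previous letter positive: infix evaluating to δ
              have hvv : a = prev.1 := by rw [ha, hV, hp]; simp
              have hL1 : L.1 = prev.1 + 1 := by
                rw [← hvv, (feq1 a L.1).mp hc]
              have hinf := pair_infix (y := y) hn0 hn
              apply no_delta hP (by simp) hinf
              rw [evalWord_pair, ← hprev, ← hL]
              have e1 : genOf prev = sig prev.1 := by simp [genOf, hp]
              have e2 : genOf L = sig L.1 := by simp [genOf, hb]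
              rw [e1, e2, hL1, sig_mul_sig prev.1]
          have ht : toPlain (posFun L.1 q) = (q.1, L.1 :: a :: t) := by
            rw [toPlain_posFun]
            have : toPlain q = (q.1, a :: t) := by rw [toPlain, hat]
            rw [this]
            simp [posP, hcombine]
          have h1 := congrArg Prod.fst ht
          have h2 := congrArg Prod.snd ht
          simp only [toPlain] at h1 h2
          have hlen : (posFun L.1 q).2.val.length = n + 1 := by
            rw [h2]
            simp only [List.length_cons]
            rw [← List.length_cons (a := a) (as := t), ← hat, ha2]
          refine ⟨by omega, hlen, by omega, fun m hm => ?_⟩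
          have hm0 : m = n := by omega
          subst hm0
          rw [h2, ← hL]
          simp [hV, hb]

lemma lenNF_take {y : List (Fin k × Bool)} (hy : FreelyReduced y)
    (hP : dualPoss y = 1) (hN : dualNegg y = 1) {n : ℕ} (hn : n ≤ y.length) :
    lenNF (nf (evalWord (y.take n))) = n := by
  obtain ⟨h1, h2, h3, _⟩ := master hy hP hN n hn
  unfold lenNF
  rw [h2]
  omega

end Dev

theorem prefixes_of_PN_one_words_are_geodesic (k : ℕ) [NeZero k] (hk : 3 ≤ k)
    (y : List (Fin k × Bool)) (hy : FreelyReduced y)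
    (hP : dualPoss y = 1) (hN : dualNegg y = 1) :
    (∀ n < y.length, ∀ (r r' : ℤ) (ws ws' : List (DualArtin k)),
      IsDualLNF (evalWord (y.take n)) r ws →
      IsDualLNF (evalWord (y.take (n + 1))) r' ws' →
      r'.natAbs + (r' + ws'.length).natAbs = r.natAbs + (r + ws.length).natAbs + 1) ∧
    ∀ n ≤ y.length, wordLength (dualGens k) (evalWord (y.take n)) = n := by
  constructor
  · intro n hn r r' ws ws' hws hws'
    obtain ⟨p1, p2⟩ := lnf_pin hws
    obtain ⟨p1', p2'⟩ := lnf_pin hws'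
    obtain ⟨m1, m2, m3, _⟩ := master hy hP hN n (by omega)
    obtain ⟨m1', m2', m3', _⟩ := master hy hP hN (n + 1) (by omega)
    rw [p1] at m1 m3
    rw [p2] at m2
    rw [p1'] at m1' m3'
    rw [p2'] at m2'
    omega
  · intro n hn
    apply wordLength_eq
    · refine ⟨(y.take n).map genOf, ?_, ?_, rfl⟩
      · rw [List.length_map, List.length_take]
        omega
      · rintro g hg
        rw [List.mem_map] at hg
        obtain ⟨p, _, rfl⟩ := hg
        rcases hb : p.2 with _ | _
        · exact ⟨p.1, Or.inr (by simp [genOf, hb])⟩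
        · exact ⟨p.1, Or.inl (by simp [genOf, hb])⟩
    · exact lenNF_take hy hP hN hn
end

section
/- In the dihedral Artin group A_k with dual generating set, for every element w with left dual normal form δʳ w₁⋯wₛ and every dual generator g, writing wg in left dual normal form δ^{r'} w'₁⋯w'_{s'}, exactly one of the following holds: (r',s') = (r+1, s−1), (r, s+1), (r, s−1), or (r−1, s+1); hence |r'|+|r'+s'| differs from |r|+|r+s| by at most 1. -/
lemma sig_mul {k : ℕ} [NeZero k] (i : Fin k) : sig i * sig (i+1) = dualDelta k := by
  have hmem : (FreeGroup.of i * FreeGroup.of (i+1) * (FreeGroup.of 0 * FreeGroup.of 1)⁻¹ :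
      FreeGroup (Fin k)) ∈ Subgroup.normalClosure (DualRels k) :=
    Subgroup.subset_normalClosure ⟨i, rfl⟩
  have h1 : PresentedGroup.mk (DualRels k)
      (FreeGroup.of i * FreeGroup.of (i+1) * (FreeGroup.of 0 * FreeGroup.of 1)⁻¹) = 1 :=
    (QuotientGroup.eq_one_iff _).2 hmem
  simp only [map_mul, map_inv] at h1
  have : sig i * sig (i+1) * (sig 0 * sig 1)⁻¹ = 1 := h1
  rw [dualDelta]
  group at this ⊢
  exact mul_inv_eq_one.mp this

lemma delta_sig {k : ℕ} [NeZero k] (j : Fin k) :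
    dualDelta k * sig j = sig (j - 2) * dualDelta k := by
  have h1 := sig_mul (k := k) (j - 2)
  have h2 := sig_mul (k := k) (j - 1)
  have e1 : (j - 2) + 1 = j - 1 := by open Fin.CommRing in ring
  have e2 : (j - 1) + 1 = j := by open Fin.CommRing in ring
  rw [e1] at h1; rw [e2] at h2
  calc dualDelta k * sig j = sig (j-2) * sig (j-1) * sig j := by rw [h1]
    _ = sig (j-2) * dualDelta k := by rw [mul_assoc, h2]

lemma conj_delta {k : ℕ} [NeZero k] (ws : List (DualArtin k))
    (h : ∀ x ∈ ws, ∃ i : Fin k, x = sig i) :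
    ∃ ws2 : List (DualArtin k), (∀ x ∈ ws2, ∃ i : Fin k, x = sig i) ∧
      ws2.length = ws.length ∧ dualDelta k * ws.prod = ws2.prod * dualDelta k := by
  induction ws with
  | nil => exact ⟨[], by simp, by simp, by simp⟩
  | cons x t ih =>
    obtain ⟨ws2, h2, hl, he⟩ := ih (fun y hy => h y (List.mem_cons_of_mem _ hy))
    obtain ⟨i, hi⟩ := h x List.mem_cons_self
    refine ⟨sig (i-2) :: ws2, ?_, by simp [hl], ?_⟩
    · intro y hy
      rcases List.mem_cons.mp hy with rfl | hy
      exacts [⟨i-2, rfl⟩, h2 y hy]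
    · simp only [List.prod_cons, hi, ← mul_assoc, delta_sig i]
      rw [mul_assoc, he, ← mul_assoc]

lemma neg_decomp {k : ℕ} [NeZero k] (r : ℤ) (ws : List (DualArtin k))
    (h : ∀ x ∈ ws, ∃ i : Fin k, x = sig i) (j : Fin k) :
    ∃ ws2 : List (DualArtin k), (∀ x ∈ ws2, ∃ i : Fin k, x = sig i) ∧
      ws2.length = ws.length + 1 ∧
      dualDelta k ^ r * ws.prod * (sig j)⁻¹ = dualDelta k ^ (r - 1) * ws2.prod := by
  have hinv : (sig j)⁻¹ = sig (j+1) * (dualDelta k)⁻¹ := by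
    rw [← sig_mul j]; group
  set L : List (DualArtin k) := ws ++ [sig (j+1)] with hL
  have hLs : ∀ x ∈ L, ∃ i : Fin k, x = sig i := by
    intro x hx
    rcases List.mem_append.mp hx with hx | hx
    · exact h x hx
    · simp at hx; exact ⟨j+1, hx⟩
  obtain ⟨ws2, h2, hl, he⟩ := conj_delta L hLs
  refine ⟨ws2, h2, by simpa [hL] using hl, ?_⟩
  have hLp : L.prod = ws.prod * sig (j+1) := by simp [hL]
  have key : L.prod * (dualDelta k)⁻¹ = (dualDelta k)⁻¹ * ws2.prod := by
    rw [eq_comm, inv_mul_eq_iff_eq_mul, ← mul_assoc, he]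
    group
  calc dualDelta k ^ r * ws.prod * (sig j)⁻¹
      = dualDelta k ^ r * (L.prod * (dualDelta k)⁻¹) := by
        rw [hinv, hLp]; group
    _ = dualDelta k ^ r * ((dualDelta k)⁻¹ * ws2.prod) := by rw [key]
    _ = dualDelta k ^ (r - 1) * ws2.prod := by
        rw [← mul_assoc, ← zpow_sub_one]

noncomputable def phi (k : ℕ) [NeZero k] : DualArtin k →* Multiplicative ℤ :=
  PresentedGroup.toGroup (f := fun _ => Multiplicative.ofAdd (1 : ℤ)) (by
    rintro r ⟨i, rfl⟩
    simp [← ofAdd_add]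
    rfl)

lemma phi_sig {k : ℕ} [NeZero k] (i : Fin k) : phi k (sig i) = Multiplicative.ofAdd 1 :=
  PresentedGroup.toGroup.of _

lemma phi_val {k : ℕ} [NeZero k] (r : ℤ) (ws : List (DualArtin k))
    (h : ∀ x ∈ ws, ∃ i : Fin k, x = sig i) :
    Multiplicative.toAdd (phi k (dualDelta k ^ r * ws.prod)) = 2 * r + ws.length := by
  have hd : phi k (dualDelta k) = Multiplicative.ofAdd 2 := by
    rw [dualDelta, map_mul, phi_sig, phi_sig]; rfl
  have hws : phi k ws.prod = Multiplicative.ofAdd (ws.length : ℤ) := by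
    induction ws with
    | nil => simp
    | cons x t ih =>
      obtain ⟨i, rfl⟩ := h x List.mem_cons_self
      rw [List.prod_cons, map_mul, phi_sig, ih (fun y hy => h y (List.mem_cons_of_mem _ hy))]
      simp [← ofAdd_add]
      ring
  rw [map_mul, map_zpow, hd, hws]
  simp
  ring

theorem main_test (k : ℕ) [NeZero k]
    (w g : DualArtin k)
    (r r' : ℤ) (ws ws' : List (DualArtin k))
    (hsig : ∀ x ∈ ws, ∃ i : Fin k, x = sig i) (hw : w = dualDelta k ^ r * ws.prod)
    (hmin : ∀ (r2 : ℤ) (ws2 : List (DualArtin k)), (∀ x ∈ ws2, ∃ i : Fin k, x = sig i) →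
      w = dualDelta k ^ r2 * ws2.prod → ws.length ≤ ws2.length)
    (hsig' : ∀ x ∈ ws', ∃ i : Fin k, x = sig i) (hw' : w * g = dualDelta k ^ r' * ws'.prod)
    (hmin' : ∀ (r2 : ℤ) (ws2 : List (DualArtin k)), (∀ x ∈ ws2, ∃ i : Fin k, x = sig i) →
      w * g = dualDelta k ^ r2 * ws2.prod → ws'.length ≤ ws2.length)
    (j : Fin k) (hj : g = sig j ∨ g = (sig j)⁻¹) :
    ((r' = r + 1 ∧ (ws'.length : ℤ) = ws.length - 1) ∨
     (r' = r ∧ (ws'.length : ℤ) = ws.length + 1) ∨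
     (r' = r ∧ (ws'.length : ℤ) = ws.length - 1) ∨
     (r' = r - 1 ∧ (ws'.length : ℤ) = ws.length + 1)) ∧
    ((r'.natAbs + (r' + ws'.length).natAbs : ℤ) -
        (r.natAbs + (r + ws.length).natAbs : ℤ)).natAbs ≤ 1 := by
  rcases hj with hj | hj
  · -- g = sig j
    have hb1 : ws'.length ≤ ws.length + 1 := by
      have hall : ∀ x ∈ ws ++ [sig j], ∃ i : Fin k, x = sig i := by
        intro x hx
        rcases List.mem_append.mp hx with hx | hx
        · exact hsig x hx
        · simp at hx; exact ⟨j, hx⟩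
      have := hmin' r (ws ++ [sig j]) hall (by rw [hj, hw]; simp [mul_assoc])
      simpa using this
    obtain ⟨ws2, h2, hl2, he2⟩ := neg_decomp r' ws' hsig' j
    have hb2 : ws.length ≤ ws'.length + 1 := by
      have hw2 : w = dualDelta k ^ (r' - 1) * ws2.prod := by
        have e : w = (w * g) * (sig j)⁻¹ := by rw [hj]; group
        rw [e, hw', he2]
      have := hmin (r' - 1) ws2 h2 hw2
      omega
    have key : (2*r' + ws'.length : ℤ) = 2*r + ws.length + 1 := by
      calc (2*r' + ws'.length : ℤ) = Multiplicative.toAdd (phi k (w*g)) := by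
            rw [hw', phi_val r' ws' hsig']
        _ = Multiplicative.toAdd (phi k w) + Multiplicative.toAdd (phi k g) := by
            rw [map_mul, toAdd_mul]
        _ = (2*r + ws.length) + 1 := by
            rw [hw, phi_val r ws hsig, hj, phi_sig]; rfl
    omega
  · -- g = (sig j)⁻¹
    obtain ⟨ws2, h2, hl2, he2⟩ := neg_decomp r ws hsig j
    have hb1 : ws'.length ≤ ws.length + 1 := by
      have hw2 : w * g = dualDelta k ^ (r - 1) * ws2.prod := by
        rw [hj, hw, he2]
      have := hmin' (r - 1) ws2 h2 hw2
      omega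
    have hb2 : ws.length ≤ ws'.length + 1 := by
      have hall : ∀ x ∈ ws' ++ [sig j], ∃ i : Fin k, x = sig i := by
        intro x hx
        rcases List.mem_append.mp hx with hx | hx
        · exact hsig' x hx
        · simp at hx; exact ⟨j, hx⟩
      have e : w = (w * g) * sig j := by rw [hj]; group
      have := hmin r' (ws' ++ [sig j]) hall (by rw [e, hw']; simp [mul_assoc])
      simpa using this
    have key : (2*r' + ws'.length : ℤ) = 2*r + ws.length - 1 := by
      calc (2*r' + ws'.length : ℤ) = Multiplicative.toAdd (phi k (w*g)) := by
            rw [hw', phi_val r' ws' hsig']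
        _ = Multiplicative.toAdd (phi k w) + Multiplicative.toAdd (phi k g) := by
            rw [map_mul, toAdd_mul]
        _ = (2*r + ws.length) - 1 := by
            rw [hw, phi_val r ws hsig, hj, map_inv, phi_sig]; rfl
    omega

theorem dual_normal_form_right_mult (k : ℕ) [NeZero k] (hk : 3 ≤ k)
    (w g : DualArtin k) (hg : g ∈ dualGens k)
    (r r' : ℤ) (ws ws' : List (DualArtin k))
    (h : IsDualLNF w r ws) (h' : IsDualLNF (w * g) r' ws') :
    ((r' = r + 1 ∧ (ws'.length : ℤ) = ws.length - 1) ∨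
     (r' = r ∧ (ws'.length : ℤ) = ws.length + 1) ∨
     (r' = r ∧ (ws'.length : ℤ) = ws.length - 1) ∨
     (r' = r - 1 ∧ (ws'.length : ℤ) = ws.length + 1)) ∧
    ((r'.natAbs + (r' + ws'.length).natAbs : ℤ) -
        (r.natAbs + (r + ws.length).natAbs : ℤ)).natAbs ≤ 1 := by
  
  obtain ⟨hsig, hw, hmin⟩ := h
  obtain ⟨hsig', hw', hmin'⟩ := h'
  obtain ⟨j, hj⟩ := hg
  exact main_test k w g r r' ws ws' hsig hw hmin hsig' hw' hmin' j hj
end
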